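/- arXiv:2301.01445 — 3 statements merged into one kernel-verified Lean document; each statement's English description precedes it below -/
import Mathlib

section
/- A polynomial vector field v : ℝ^S → ℝ^S on a finite set S of coordinates is essentially nonnegative if v(x)(i) ≥ 0 whenever x ≥ 0 componentwise and x(i) = 0. If v is essentially nonnegative and f : S → S' is any function between finite sets, then the transformed vector field f_* ∘ v ∘ f* : ℝ^{S'} → ℝ^{S'} is also essentially nonnegative. -/
open scoped Classical

/-- A vector field on `ℝ^S` is polynomial if each component is a polynomial in
the coordinates. -/
def IsPolyVF {S : Type} (v : (S → ℝ) → (S → ℝ)) : Prop :=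
  ∀ i : S, ∃ p : MvPolynomial S ℝ, ∀ x, v x i = MvPolynomial.eval x p

/-- A vector field `v : ℝ^S → ℝ^S` is essentially nonnegative if `v(x)(i) ≥ 0`
whenever `x ≥ 0` componentwise and `x(i) = 0`. -/
def EssNonneg {S : Type} (v : (S → ℝ) → (S → ℝ)) : Prop :=
  ∀ (x : S → ℝ) (i : S), (∀ j, 0 ≤ x j) → x i = 0 → 0 ≤ v x i

/-- The transformed vector field `f_* ∘ v ∘ f*` along `f : S → T`, where `f*` is
precomposition and `f_*` sums over fibers. -/
noncomputable def transformVF {S T : Type} [Fintype S] (f : S → T)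
    (v : (S → ℝ) → (S → ℝ)) : (T → ℝ) → (T → ℝ) :=
  fun x i' => ∑ i : S, if f i = i' then v (x ∘ f) i else 0

/-- If a polynomial vector field `v` on `ℝ^S` is essentially nonnegative and
`f : S → S'` is any function between finite sets, then the transformed vector
field `f_* ∘ v ∘ f*` is also essentially nonnegative. -/
theorem transform_essNonneg {S S' : Type} [Fintype S] [Fintype S'] (f : S → S')
    (v : (S → ℝ) → (S → ℝ)) (hpoly : IsPolyVF v) (hv : EssNonneg v) :
    EssNonneg (transformVF f v) := by
  intro x i' hx hxi
  refine Finset.sum_nonneg fun i _ => ?_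
  split
  · exact hv _ _ (fun j => hx _) (by simp [Function.comp, *])
  · exact le_refl 0
end

section
/- Let LV be the assignment sending a finite graph X to the linearly parameterized dynamical system with parameters X(V) + X(E), states X(V), and vector field v(x; ρ, β)(i) = ρ(i)x(i) + Σ_{e : i'→i} β(e)x(i')x(i), and sending a graph homomorphism φ : X → Y to the pair (φ_V + φ_E, φ_V). Then for every graph homomorphism φ and all y ∈ ℝ^{Y(V)}, ρ ∈ ℝ^{X(V)}, β ∈ ℝ^{X(E)}, the naturality equation (φ_V)_*( v_X(φ_V^*(y); ρ, β) ) = v_Y(y; (φ_V)_*(ρ), (φ_E)_*(β)) holds; hence LV is a functor from finite graphs to linearly parameterized dynamical systems. -/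
open scoped Classical

/-- A finite graph: finite vertex and edge sets with source and target maps. -/
structure FinGraph where
  V : Type
  E : Type
  [fV : Fintype V]
  [fE : Fintype E]
  src : E → V
  tgt : E → V

attribute [instance] FinGraph.fV FinGraph.fE

/-- A graph homomorphism: vertex and edge maps preserving sources and targets. -/
structure FinGraphHom (X Y : FinGraph) where
  vmap : X.V → Y.V
  emap : X.E → Y.E
  src_comm : ∀ e, Y.src (emap e) = vmap (X.src e)
  tgt_comm : ∀ e, Y.tgt (emap e) = vmap (X.tgt e)

/-- Pushforward `f_*` along `f`, summing over fibers. -/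
noncomputable def graphPushFun {S S' : Type} [Fintype S] (f : S → S') (x : S → ℝ) :
    S' → ℝ :=
  fun i' => ∑ i : S, if f i = i' then x i else 0

/-- The Lotka-Volterra vector field of a finite graph `X`:
`v(x; ρ, β)(i) = ρ(i)x(i) + Σ_{e : i' → i} β(e)x(i')x(i)`. -/
noncomputable def lvField (X : FinGraph) (ρ : X.V → ℝ) (β : X.E → ℝ)
    (x : X.V → ℝ) : X.V → ℝ :=
  fun i => ρ i * x i +
    ∑ e : X.E, if X.tgt e = i then β e * x (X.src e) * x i else 0

/-- Naturality of the Lotka-Volterra model: for every graph homomorphism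
`φ : X → Y` and all `y ∈ ℝ^{Y(V)}`, `ρ ∈ ℝ^{X(V)}`, `β ∈ ℝ^{X(E)}`,
`(φ_V)_*(v_X(φ_V^*(y); ρ, β)) = v_Y(y; (φ_V)_*(ρ), (φ_E)_*(β))`;
hence LV is a functor from finite graphs to linearly parameterized dynamical
systems. -/
theorem lv_naturality {X Y : FinGraph} (φ : FinGraphHom X Y)
    (y : Y.V → ℝ) (ρ : X.V → ℝ) (β : X.E → ℝ) :
    graphPushFun φ.vmap (lvField X ρ β (y ∘ φ.vmap)) =
      lvField Y (graphPushFun φ.vmap ρ) (graphPushFun φ.emap β) y := by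
  funext j
  simp only [graphPushFun, lvField, Function.comp_apply]
  have L : ∀ i : X.V,
      (if φ.vmap i = j then
          ρ i * y (φ.vmap i) +
            ∑ e : X.E, (if X.tgt e = i then β e * y (φ.vmap (X.src e)) * y (φ.vmap i) else 0)
        else 0)
      = (if φ.vmap i = j then ρ i * y j else 0)
        + ∑ e : X.E, (if X.tgt e = i then
            (if φ.vmap i = j then β e * y (φ.vmap (X.src e)) * y j else 0) else 0) := by
    intro i
    by_cases h : φ.vmap i = j <;> simp [h]
  rw [Finset.sum_congr rfl fun i _ => L i, Finset.sum_add_distrib]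
  congr 1
  · rw [Finset.sum_mul]
    exact Finset.sum_congr rfl fun i _ => by by_cases h : φ.vmap i = j <;> simp [h]
  · trans (∑ e : X.E, if φ.vmap (X.tgt e) = j then β e * y (φ.vmap (X.src e)) * y j else 0)
    · rw [Finset.sum_comm]
      refine Finset.sum_congr rfl fun e _ => ?_
      simp [Finset.sum_ite_eq]
    · have R : ∀ f : Y.E,
          (if Y.tgt f = j then (∑ e : X.E, if φ.emap e = f then β e else 0) * y (Y.src f) * y j else 0)
          = ∑ e : X.E, (if φ.emap e = f then
              (if Y.tgt f = j then β e * y (Y.src f) * y j else 0) else 0) := by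
        intro f
        by_cases h : Y.tgt f = j <;> simp [h, Finset.sum_mul]
      rw [Finset.sum_congr rfl fun f _ => R f, Finset.sum_comm]
      refine Finset.sum_congr rfl fun e _ => ?_
      have : ∀ f : Y.E, (if φ.emap e = f then (if Y.tgt f = j then β e * y (Y.src f) * y j else 0) else 0)
          = (if φ.emap e = f then (if φ.vmap (X.tgt e) = j then β e * y (φ.vmap (X.src e)) * y j else 0) else 0) := by
        intro f
        by_cases h : φ.emap e = f <;> simp [h, ← φ.src_comm, ← φ.tgt_comm]
      rw [Finset.sum_congr rfl fun f _ => this f, Finset.sum_ite_eq]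
      simp
end

section
/- For finite signed graphs and sign-preserving graph homomorphisms φ : X → Y, the naturality equation (φ_V)_*( v_X(φ_V^*(y); ρ, β) ) = v_Y(y; (φ_V)_*(ρ), (φ_E)_*(β)) holds for the signed Lotka-Volterra vector fields v_X(x; ρ, β)(i) = −ρ(i)x(i) + Σ_{e : i'→i} sgn_X(e)β(e)x(i')x(i), for all y ∈ ℝ^{Y(V)}, ρ ∈ ℝ≥0^{X(V)}, β ∈ ℝ≥0^{X(E)}. -/
open scoped Classical

/-- A finite signed graph. -/
structure FinSgnGraph where
  V : Type
  E : Type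
  [fV : Fintype V]
  [fE : Fintype E]
  src : E → V
  tgt : E → V
  sgn : E → ℤˣ

attribute [instance] FinSgnGraph.fV FinSgnGraph.fE

/-- A morphism of signed graphs: a graph homomorphism preserving sources,
targets, and signs. -/
structure FinSgnGraphHom (X Y : FinSgnGraph) where
  vmap : X.V → Y.V
  emap : X.E → Y.E
  src_comm : ∀ e, Y.src (emap e) = vmap (X.src e)
  tgt_comm : ∀ e, Y.tgt (emap e) = vmap (X.tgt e)
  sgn_comm : ∀ e, Y.sgn (emap e) = X.sgn e

/-- Pushforward `f_*` along `f`, summing over fibers. -/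
noncomputable def finPushFun {S S' : Type} [Fintype S] (f : S → S') (x : S → ℝ) :
    S' → ℝ :=
  fun i' => ∑ i : S, if f i = i' then x i else 0

/-- The signed Lotka-Volterra vector field:
`v_X(x; ρ, β)(i) = −ρ(i)x(i) + Σ_{e : i' → i} sgn_X(e)β(e)x(i')x(i)`. -/
noncomputable def lvSgnField (X : FinSgnGraph) (ρ : X.V → ℝ) (β : X.E → ℝ)
    (x : X.V → ℝ) : X.V → ℝ :=
  fun i => -ρ i * x i +
    ∑ e : X.E,
      if X.tgt e = i then ((X.sgn e : ℤ) : ℝ) * β e * x (X.src e) * x i else 0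

/-- Naturality of the signed Lotka-Volterra model: for sign-preserving graph
homomorphisms `φ : X → Y` and nonnegative parameters,
`(φ_V)_*(v_X(φ_V^*(y); ρ, β)) = v_Y(y; (φ_V)_*(ρ), (φ_E)_*(β))`. -/
theorem lvSgn_naturality {X Y : FinSgnGraph} (φ : FinSgnGraphHom X Y)
    (y : Y.V → ℝ) (ρ : X.V → ℝ) (β : X.E → ℝ)
    (hρ : ∀ i, 0 ≤ ρ i) (hβ : ∀ e, 0 ≤ β e) :
    finPushFun φ.vmap (lvSgnField X ρ β (y ∘ φ.vmap)) =
      lvSgnField Y (finPushFun φ.vmap ρ) (finPushFun φ.emap β) y := by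
  funext j
  simp only [finPushFun, lvSgnField, Function.comp]
  have split : ∀ i : X.V,
      (if φ.vmap i = j then
        -ρ i * y (φ.vmap i) +
          ∑ e : X.E, if X.tgt e = i then
            ((X.sgn e : ℤ) : ℝ) * β e * y (φ.vmap (X.src e)) * y (φ.vmap i)
          else 0
      else 0)
      = (if φ.vmap i = j then -ρ i * y (φ.vmap i) else 0) +
        ∑ e : X.E, if X.tgt e = i then
          (if φ.vmap i = j then
            ((X.sgn e : ℤ) : ℝ) * β e * y (φ.vmap (X.src e)) * y (φ.vmap i)
           else 0) else 0 := by
    intro i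
    split_ifs with h <;> simp [Finset.sum_ite_irrel]
  rw [funext split] at *
  rw [Finset.sum_add_distrib, Finset.sum_comm]
  simp only [Finset.sum_ite_eq, Finset.mem_univ, if_true]
  congr 1
  · rw [neg_mul, Finset.sum_mul, ← neg_eq_iff_eq_neg, ← Finset.sum_neg_distrib]
    apply Finset.sum_congr rfl
    intro i _
    split_ifs with h
    · rw [h]; ring
    · simp
  · -- quadratic terms
    have : ∀ e' : Y.E,
        (if Y.tgt e' = j then
          ((Y.sgn e' : ℤ) : ℝ) * (∑ e : X.E, if φ.emap e = e' then β e else 0) *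
            y (Y.src e') * y j else 0)
        = ∑ e : X.E, if φ.emap e = e' then
            (if Y.tgt e' = j then ((Y.sgn e' : ℤ) : ℝ) * β e * y (Y.src e') * y j
             else 0) else 0 := by
      intro e'
      split_ifs with h
      · rw [Finset.mul_sum, Finset.sum_mul, Finset.sum_mul]
        apply Finset.sum_congr rfl
        intro e _
        split_ifs <;> simp
      · simp
    rw [funext this, Finset.sum_comm]
    simp only [Finset.sum_ite_eq, Finset.mem_univ, if_true]
    apply Finset.sum_congr rfl
    intro e _
    rw [φ.tgt_comm, φ.src_comm, φ.sgn_comm]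
    split_ifs with h
    · rw [h]
    · rfl
end
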